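/- For multivariate Gaussian densities f₁ = N(μ₁, Σ₁) and f₂ = N(μ₂, Σ₂) on ℝᵈ and α ∈ ℝ such that αΣ₂ + (1−α)Σ₁ is positive definite, the integral ∫ f₁(x)^α f₂(x)^{1−α} dx equals det(αΣ₂ + (1−α)Σ₁)^{−1/2} · det(Σ₁)^{(1−α)/2} · det(Σ₂)^{α/2} · exp{ (α(α−1)/2) (μ₁−μ₂)ᵀ (αΣ₂ + (1−α)Σ₁)⁻¹ (μ₁−μ₂) }. -/

import Mathlib

open MeasureTheory Matrix Real

/-- Multivariate Gaussian density with mean `m` and covariance `C`. -/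
noncomputable def gaussPdf {d : ℕ} (m : Fin d → ℝ) (C : Matrix (Fin d) (Fin d) ℝ)
    (x : Fin d → ℝ) : ℝ :=
  (2 * Real.pi) ^ (-(d : ℝ) / 2) * C.det ^ (-(1 : ℝ) / 2) *
    Real.exp (-(1 / 2) * ((x - m) ⬝ᵥ C⁻¹.mulVec (x - m)))

variable {d : ℕ}

lemma my_herm_iff {A : Matrix (Fin d) (Fin d) ℝ} : A.IsHermitian ↔ Aᵀ = A := by
  rw [Matrix.IsHermitian, Matrix.conjTranspose_eq_transpose_of_trivial]

lemma my_posDef_conj {A N : Matrix (Fin d) (Fin d) ℝ} (hA : A.PosDef)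
    (hdet : N.det ≠ 0) (hsym : Nᵀ = N) : (N * A * N).PosDef := by
  refine Matrix.PosDef.of_dotProduct_mulVec_pos (my_herm_iff.mpr ?_) (fun x hx => ?_)
  · rw [Matrix.transpose_mul, Matrix.transpose_mul, hsym, my_herm_iff.mp hA.1]
    rw [Matrix.mul_assoc]
  · have hy : N *ᵥ x ≠ 0 := by
      intro h
      exact hdet ((Matrix.exists_mulVec_eq_zero_iff).mp ⟨x, hx, h⟩)
    have key : x ⬝ᵥ (N * A * N) *ᵥ x = (N *ᵥ x) ⬝ᵥ A *ᵥ (N *ᵥ x) := by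
      rw [← Matrix.mulVec_mulVec, Matrix.dotProduct_mulVec x (N * A)]
      rw [show x ᵥ* (N * A) = (x ᵥ* N) ᵥ* A from Matrix.vecMul_vecMul x N A |>.symm]
      conv_lhs => rw [← hsym]
      rw [Matrix.vecMul_transpose, ← Matrix.dotProduct_mulVec, hsym]
    simpa [key] using hA.dotProduct_mulVec_pos hy

lemma my_posDef_of_sq {R A : Matrix (Fin d) (Fin d) ℝ} (hR : R.PosSemidef)
    (hA : A.PosDef) (h : R * R = A) : R.PosDef := by
  refine Matrix.PosDef.of_dotProduct_mulVec_pos hR.1 (fun x hx => ?_)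
  rcases lt_or_eq_of_le (hR.dotProduct_mulVec_nonneg x) with hlt | heq
  · simpa using hlt
  · exfalso
    have h0 : R *ᵥ x = 0 := (hR.dotProduct_mulVec_zero_iff x).mp heq.symm
    have hz : A *ᵥ x = 0 := by rw [← h, ← Matrix.mulVec_mulVec, h0, Matrix.mulVec_zero]
    have h2 := hA.dotProduct_mulVec_pos hx
    rw [hz] at h2
    simp at h2

section
open scoped MatrixOrder
lemma my_exists_sqrt {S : Matrix (Fin d) (Fin d) ℝ} (hS : S.PosDef) :
    ∃ R : Matrix (Fin d) (Fin d) ℝ, R.PosDef ∧ Rᵀ = R ∧ R * R = S :=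
  ⟨CFC.sqrt S, my_posDef_of_sq (CFC.sqrt_nonneg S).posSemidef hS
      (CFC.sqrt_mul_sqrt_self S hS.posSemidef.nonneg),
    my_herm_iff.mp (CFC.sqrt_nonneg S).posSemidef.1, CFC.sqrt_mul_sqrt_self S hS.posSemidef.nonneg⟩
end

lemma my_integral_gauss_one : ∫ y : Fin d → ℝ, Real.exp (-(1/2) * (y ⬝ᵥ y))
    = (2 * Real.pi) ^ ((d : ℝ) / 2) := by
  have h1 : ∀ y : Fin d → ℝ, Real.exp (-(1/2) * (y ⬝ᵥ y))
      = ∏ i, Real.exp (-(1/2) * (y i * y i)) := by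
    intro y
    rw [← Real.exp_sum]
    congr 1
    simp [dotProduct, Finset.mul_sum]
  simp_rw [h1]
  rw [MeasureTheory.integral_fintype_prod_volume_eq_pow (ι := Fin d)
    (fun t : ℝ => Real.exp (-(1/2) * (t * t)))]
  have h2 : ∫ t : ℝ, Real.exp (-(1/2) * (t * t)) = Real.sqrt (2 * Real.pi) := by
    have := integral_gaussian (1/2)
    simp_rw [show ∀ t : ℝ, -(1/2 : ℝ) * (t * t) = -(1/2) * t ^ 2 by intro t; ring] at *
    rw [this]
    rw [show Real.pi / (1/2) = 2 * Real.pi by ring]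
  rw [h2, Fintype.card_fin]
  rw [show Real.sqrt (2 * Real.pi) = (2 * Real.pi) ^ ((1:ℝ)/2) from
    Real.sqrt_eq_rpow _, ← Real.rpow_natCast ((2*Real.pi) ^ ((1:ℝ)/2)) d,
    ← Real.rpow_mul (by positivity)]
  ring_nf

lemma my_integral_exp_quad {A : Matrix (Fin d) (Fin d) ℝ} (hA : A.PosDef) :
    ∫ x : Fin d → ℝ, Real.exp (-(1/2) * (x ⬝ᵥ A *ᵥ x))
      = (2 * Real.pi) ^ ((d : ℝ) / 2) * A.det ^ (-(1:ℝ)/2) := by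
  obtain ⟨R, hR, hRsym, hRR⟩ := my_exists_sqrt hA
  have hRdet : (0:ℝ) < R.det := hR.det_pos
  have hdetA : R.det * R.det = A.det := by rw [← Matrix.det_mul, hRR]
  set g : (Fin d → ℝ) → ℝ := fun y => Real.exp (-(1/2) * (y ⬝ᵥ y)) with hg
  have hgc : Continuous g := by
    apply Real.continuous_exp.comp
    apply Continuous.mul continuous_const
    unfold dotProduct
    exact continuous_finset_sum _ fun i _ => (continuous_apply i).mul (continuous_apply i)
  have hfc : Continuous (Matrix.toLin' R) :=
    LinearMap.continuous_of_finiteDimensional _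
  have hptwise : ∀ x : Fin d → ℝ, Real.exp (-(1/2) * (x ⬝ᵥ A *ᵥ x)) = g (Matrix.toLin' R x) := by
    intro x
    simp only [hg, Matrix.toLin'_apply]
    congr 2
    rw [← hRR, ← Matrix.mulVec_mulVec, Matrix.dotProduct_mulVec]
    conv_lhs => rw [← hRsym]
    rw [Matrix.vecMul_transpose, hRsym]
  have hdet' : LinearMap.det (Matrix.toLin' R) ≠ 0 := by
    rw [LinearMap.det_toLin']; exact hRdet.ne'
  have hmap : Measure.map (Matrix.toLin' R) volume
      = ENNReal.ofReal |(LinearMap.det (Matrix.toLin' R))⁻¹| • volume :=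
    Measure.map_linearMap_addHaar_pi_eq_smul_addHaar hdet' volume
  calc ∫ x : Fin d → ℝ, Real.exp (-(1/2) * (x ⬝ᵥ A *ᵥ x))
      = ∫ x : Fin d → ℝ, g (Matrix.toLin' R x) := by simp_rw [hptwise]
    _ = ∫ y, g y ∂(Measure.map (Matrix.toLin' R) volume) := by
        rw [MeasureTheory.integral_map hfc.aemeasurable hgc.aestronglyMeasurable]
    _ = (ENNReal.ofReal |(LinearMap.det (Matrix.toLin' R))⁻¹|).toReal * ∫ y, g y := by
        rw [hmap, MeasureTheory.integral_smul_measure]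
        rfl
    _ = R.det⁻¹ * (2 * Real.pi) ^ ((d : ℝ) / 2) := by
        rw [my_integral_gauss_one, LinearMap.det_toLin',
          ENNReal.toReal_ofReal (abs_nonneg _), abs_of_pos (by positivity)]
    _ = (2 * Real.pi) ^ ((d : ℝ) / 2) * A.det ^ (-(1:ℝ)/2) := by
        have : A.det ^ (-(1:ℝ)/2) = R.det⁻¹ := by
          rw [← hdetA, show R.det * R.det = R.det ^ (2:ℕ) by ring,
            ← Real.rpow_natCast R.det 2, ← Real.rpow_mul hRdet.le]
          norm_num
          exact Real.rpow_neg_one R.det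
        rw [this]; ring

lemma my_mix_inv_posDef {S₁ S₂ : Matrix (Fin d) (Fin d) ℝ} (hS₁ : S₁.PosDef) (hS₂ : S₂.PosDef)
    (α : ℝ) (hmix : (α • S₂ + (1 - α) • S₁).PosDef) :
    (α • S₁⁻¹ + (1 - α) • S₂⁻¹).PosDef := by
  have hS₁u : IsUnit S₁.det := isUnit_iff_ne_zero.mpr hS₁.det_pos.ne'
  obtain ⟨F, hF, hFsym, hFF⟩ := my_exists_sqrt hS₁.inv
  have hFdet : (0:ℝ) < F.det := hF.det_pos
  have hFu : IsUnit F.det := isUnit_iff_ne_zero.mpr hFdet.ne'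
  have hD : (F * S₂ * F).PosDef := my_posDef_conj hS₂ hFdet.ne' hFsym
  set D := F * S₂ * F with hDdef
  have hDu : IsUnit D.det := isUnit_iff_ne_zero.mpr hD.det_pos.ne'
  obtain ⟨E, hE, hEsym, hEE⟩ := my_exists_sqrt hD.inv
  have hEdet : (0:ℝ) < E.det := hE.det_pos
  have hEu : IsUnit E.det := isUnit_iff_ne_zero.mpr hEdet.ne'
  have hNsym : (F * E * F)ᵀ = F * E * F := by
    simp only [Matrix.transpose_mul, hFsym, hEsym, Matrix.mul_assoc]
  have hNdet : (F * E * F).det ≠ 0 := by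
    simp only [Matrix.det_mul]
    positivity
  -- key identities
  have h1 : F * S₁ * F = 1 := by
    have hl : (S₁ * F) * F = 1 := by
      rw [Matrix.mul_assoc, hFF, Matrix.mul_nonsing_inv _ hS₁u]
    have hFi : F⁻¹ = S₁ * F := Matrix.inv_eq_left_inv hl
    calc F * S₁ * F = F * (S₁ * F) := by rw [Matrix.mul_assoc]
      _ = F * F⁻¹ := by rw [hFi]
      _ = 1 := Matrix.mul_nonsing_inv _ hFu
  have h2 : E * D * E = 1 := by
    have hl : (D * E) * E = 1 := by
      rw [Matrix.mul_assoc, hEE, Matrix.mul_nonsing_inv _ hDu]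
    have hEi : E⁻¹ = D * E := Matrix.inv_eq_left_inv hl
    calc E * D * E = E * (D * E) := by rw [Matrix.mul_assoc]
      _ = E * E⁻¹ := by rw [hEi]
      _ = 1 := Matrix.mul_nonsing_inv _ hEu
  have h3 : F * D⁻¹ * F = S₂⁻¹ := by
    have : D⁻¹ = F⁻¹ * (S₂⁻¹ * F⁻¹) := by
      rw [hDdef, Matrix.mul_inv_rev, Matrix.mul_inv_rev]
    rw [this, ← Matrix.mul_assoc, ← Matrix.mul_assoc,
      Matrix.mul_nonsing_inv _ hFu, Matrix.one_mul, Matrix.mul_assoc,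
      Matrix.nonsing_inv_mul _ hFu, Matrix.mul_one]
  have step1 : F * (α • S₂ + (1 - α) • S₁) * F = α • D + (1 - α) • 1 := by
    rw [Matrix.mul_add, Matrix.add_mul, mul_smul_comm, smul_mul_assoc,
      mul_smul_comm, smul_mul_assoc, h1, hDdef]
  have step2 : E * (α • D + (1 - α) • 1) * E = α • 1 + (1 - α) • D⁻¹ := by
    rw [Matrix.mul_add, Matrix.add_mul, mul_smul_comm, smul_mul_assoc,
      mul_smul_comm, smul_mul_assoc, h2, Matrix.mul_one, hEE]
  have step3 : F * (α • 1 + (1 - α) • D⁻¹) * F = α • S₁⁻¹ + (1 - α) • S₂⁻¹ := by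
    rw [Matrix.mul_add, Matrix.add_mul, mul_smul_comm, smul_mul_assoc,
      mul_smul_comm, smul_mul_assoc, Matrix.mul_one, hFF, h3]
  have key : (F * E * F) * (α • S₂ + (1 - α) • S₁) * (F * E * F)
      = α • S₁⁻¹ + (1 - α) • S₂⁻¹ := by
    have e1 : (F * E * F) * (α • S₂ + (1 - α) • S₁) * (F * E * F)
        = F * E * (F * (α • S₂ + (1 - α) • S₁) * F) * E * F := by
      simp only [Matrix.mul_assoc]
    rw [e1, step1]
    have e2 : F * E * (α • D + (1 - α) • 1) * E * F
        = F * (E * (α • D + (1 - α) • 1) * E) * F := by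
      simp only [Matrix.mul_assoc]
    rw [e2, step2, step3]
  rw [← key]
  exact my_posDef_conj hmix hNdet hNsym


/-- Closed form of `∫ f₁^α f₂^(1-α)` for multivariate Gaussian densities. -/
theorem gaussian_power_product_integral {d : ℕ}
    (μ₁ μ₂ : Fin d → ℝ) (S₁ S₂ : Matrix (Fin d) (Fin d) ℝ)
    (hS₁ : S₁.PosDef) (hS₂ : S₂.PosDef) (α : ℝ)
    (hmix : (α • S₂ + (1 - α) • S₁).PosDef) :
    ∫ x : Fin d → ℝ, (gaussPdf μ₁ S₁ x) ^ α * (gaussPdf μ₂ S₂ x) ^ (1 - α)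
      = (α • S₂ + (1 - α) • S₁).det ^ (-(1 : ℝ) / 2) *
        S₁.det ^ ((1 - α) / 2) * S₂.det ^ (α / 2) *
        Real.exp ((α * (α - 1) / 2) *
          ((μ₁ - μ₂) ⬝ᵥ (α • S₂ + (1 - α) • S₁)⁻¹.mulVec (μ₁ - μ₂))) := by
  have h2π : (0:ℝ) < 2 * Real.pi := by positivity
  set M := α • S₂ + (1 - α) • S₁ with hM
  have hMu : IsUnit M.det := isUnit_iff_ne_zero.mpr hmix.det_pos.ne'
  have hS₁u : IsUnit S₁.det := isUnit_iff_ne_zero.mpr hS₁.det_pos.ne'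
  have hS₂u : IsUnit S₂.det := isUnit_iff_ne_zero.mpr hS₂.det_pos.ne'
  set A := α • S₁⁻¹ + (1 - α) • S₂⁻¹ with hA
  set δ : Fin d → ℝ := μ₂ - μ₁ with hδ
  set v : Fin d → ℝ := M⁻¹ *ᵥ δ with hv
  set m : Fin d → ℝ := μ₁ + (1 - α) • (S₁ *ᵥ v) with hm
  have hMv0 : M *ᵥ v = δ := by
    rw [hv, Matrix.mulVec_mulVec, Matrix.mul_nonsing_inv _ hMu, Matrix.one_mulVec]
  have hMv : M *ᵥ v = α • (S₂ *ᵥ v) + (1 - α) • (S₁ *ᵥ v) := by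
    rw [hM, Matrix.add_mulVec, Matrix.smul_mulVec, Matrix.smul_mulVec]
  have hw1 : m - μ₁ = (1 - α) • (S₁ *ᵥ v) := by rw [hm]; abel
  have hw2 : m - μ₂ = -(α • (S₂ *ᵥ v)) := by
    have h : m - μ₂ = (1 - α) • (S₁ *ᵥ v) - δ := by rw [hm, hδ]; abel
    rw [h, ← hMv0, hMv]; abel
  have hq1 : S₁⁻¹ *ᵥ (m - μ₁) = (1 - α) • v := by
    rw [hw1, Matrix.mulVec_smul, Matrix.mulVec_mulVec,
      Matrix.nonsing_inv_mul _ hS₁u, Matrix.one_mulVec]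
  have hq2 : S₂⁻¹ *ᵥ (m - μ₂) = -(α • v) := by
    rw [hw2, Matrix.mulVec_neg, Matrix.mulVec_smul, Matrix.mulVec_mulVec,
      Matrix.nonsing_inv_mul _ hS₂u, Matrix.one_mulVec]
  have hS₁inv_sym : (S₁⁻¹)ᵀ = S₁⁻¹ := by
    rw [← Matrix.conjTranspose_eq_transpose_of_trivial]; exact hS₁.inv.1
  have hS₂inv_sym : (S₂⁻¹)ᵀ = S₂⁻¹ := by
    rw [← Matrix.conjTranspose_eq_transpose_of_trivial]; exact hS₂.inv.1
  have hquad : ∀ (P : Matrix (Fin d) (Fin d) ℝ), Pᵀ = P → ∀ x w : Fin d → ℝ,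
      (x + w) ⬝ᵥ P *ᵥ (x + w) = x ⬝ᵥ P *ᵥ x + 2 * (x ⬝ᵥ P *ᵥ w) + w ⬝ᵥ P *ᵥ w := by
    intro P hP x w
    have hsymm : w ⬝ᵥ P *ᵥ x = x ⬝ᵥ P *ᵥ w := by
      rw [Matrix.dotProduct_mulVec]
      conv_lhs => rw [← hP]
      rw [Matrix.vecMul_transpose, dotProduct_comm]
    rw [Matrix.mulVec_add, dotProduct_add, add_dotProduct,
      add_dotProduct, hsymm]
    ring
  have hQ : ∀ x : Fin d → ℝ,
      α * ((x + m - μ₁) ⬝ᵥ S₁⁻¹ *ᵥ (x + m - μ₁))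
        + (1 - α) * ((x + m - μ₂) ⬝ᵥ S₂⁻¹ *ᵥ (x + m - μ₂))
      = x ⬝ᵥ A *ᵥ x + α * (1 - α) * (δ ⬝ᵥ M⁻¹ *ᵥ δ) := by
    intro x
    have e1 : x + m - μ₁ = x + (m - μ₁) := by abel
    have e2 : x + m - μ₂ = x + (m - μ₂) := by abel
    rw [e1, e2, hquad _ hS₁inv_sym, hquad _ hS₂inv_sym]
    have c1 : x ⬝ᵥ S₁⁻¹ *ᵥ (m - μ₁) = (1 - α) * (x ⬝ᵥ v) := by
      rw [hq1, dotProduct_smul, smul_eq_mul]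
    have c2 : x ⬝ᵥ S₂⁻¹ *ᵥ (m - μ₂) = -(α * (x ⬝ᵥ v)) := by
      rw [hq2, dotProduct_neg, dotProduct_smul, smul_eq_mul]
    have c3 : (m - μ₁) ⬝ᵥ S₁⁻¹ *ᵥ (m - μ₁) = (1 - α)^2 * ((S₁ *ᵥ v) ⬝ᵥ v) := by
      rw [hq1, hw1, dotProduct_smul, smul_dotProduct,
        smul_eq_mul, smul_eq_mul]
      ring
    have c4 : (m - μ₂) ⬝ᵥ S₂⁻¹ *ᵥ (m - μ₂) = α^2 * ((S₂ *ᵥ v) ⬝ᵥ v) := by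
      rw [hq2, hw2, neg_dotProduct, dotProduct_neg,
        smul_dotProduct, dotProduct_smul, smul_eq_mul, smul_eq_mul]
      ring
    have c5 : x ⬝ᵥ A *ᵥ x = α * (x ⬝ᵥ S₁⁻¹ *ᵥ x) + (1 - α) * (x ⬝ᵥ S₂⁻¹ *ᵥ x) := by
      rw [hA, Matrix.add_mulVec, Matrix.smul_mulVec, Matrix.smul_mulVec,
        dotProduct_add, dotProduct_smul, dotProduct_smul,
        smul_eq_mul, smul_eq_mul]
    have c6 : δ ⬝ᵥ M⁻¹ *ᵥ δ = α * ((S₂ *ᵥ v) ⬝ᵥ v) + (1 - α) * ((S₁ *ᵥ v) ⬝ᵥ v) := by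
      rw [← hv]
      conv_lhs => rw [← hMv0]
      rw [hMv, add_dotProduct, smul_dotProduct, smul_dotProduct,
        smul_eq_mul, smul_eq_mul]
    rw [c1, c2, c3, c4, c5, c6]
    ring
  have hAeq : A = S₁⁻¹ * M * S₂⁻¹ := by
    have t1 : S₁⁻¹ * (α • S₂ + (1 - α) • S₁) * S₂⁻¹
        = α • (S₁⁻¹ * S₂ * S₂⁻¹) + (1 - α) • (S₁⁻¹ * S₁ * S₂⁻¹) := by
      rw [Matrix.mul_add, Matrix.add_mul, mul_smul_comm, smul_mul_assoc,
        mul_smul_comm, smul_mul_assoc]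
    rw [hA, hM, t1, Matrix.mul_assoc S₁⁻¹ S₂ S₂⁻¹, Matrix.mul_nonsing_inv _ hS₂u,
      Matrix.mul_one, Matrix.nonsing_inv_mul _ hS₁u, Matrix.one_mul]
  have hAdet : A.det = S₁.det⁻¹ * M.det * S₂.det⁻¹ := by
    rw [hAeq, Matrix.det_mul, Matrix.det_mul, Matrix.det_nonsing_inv,
      Matrix.det_nonsing_inv]
    simp [Ring.inverse_eq_inv']
  have hs1 : (0:ℝ) < S₁.det := hS₁.det_pos
  have hs2 : (0:ℝ) < S₂.det := hS₂.det_pos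
  have hmd : (0:ℝ) < M.det := hmix.det_pos
  have hAdetpow : A.det ^ (-(1:ℝ)/2)
      = S₁.det ^ ((1:ℝ)/2) * M.det ^ (-(1:ℝ)/2) * S₂.det ^ ((1:ℝ)/2) := by
    rw [hAdet, Real.mul_rpow (by positivity) (by positivity),
      Real.mul_rpow (by positivity) (by positivity),
      ← Real.rpow_neg_one S₁.det, ← Real.rpow_neg_one S₂.det,
      ← Real.rpow_mul hs1.le, ← Real.rpow_mul hs2.le]
    norm_num
  have hpow : ∀ (μ : Fin d → ℝ) (S : Matrix (Fin d) (Fin d) ℝ), S.PosDef → ∀ (β : ℝ)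
      (x : Fin d → ℝ),
      gaussPdf μ S x ^ β = (2 * Real.pi) ^ (-(d:ℝ)/2 * β) * S.det ^ (-(1:ℝ)/2 * β)
        * Real.exp (β * (-(1/2) * ((x - μ) ⬝ᵥ S⁻¹ *ᵥ (x - μ)))) := by
    intro μ S hS β x
    unfold gaussPdf
    rw [Real.mul_rpow (mul_nonneg (Real.rpow_nonneg h2π.le _)
        (Real.rpow_nonneg hS.det_pos.le _)) (Real.exp_nonneg _),
      Real.mul_rpow (Real.rpow_nonneg h2π.le _) (Real.rpow_nonneg hS.det_pos.le _),
      ← Real.rpow_mul h2π.le, ← Real.rpow_mul hS.det_pos.le, ← Real.exp_mul]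
    ring_nf
  have hApos : A.PosDef := by
    rw [hA]; exact my_mix_inv_posDef hS₁ hS₂ α hmix
  have hpt : ∀ x : Fin d → ℝ, gaussPdf μ₁ S₁ x ^ α * gaussPdf μ₂ S₂ x ^ (1 - α)
      = ((2 * Real.pi) ^ (-(d:ℝ)/2 * α) * S₁.det ^ (-(1:ℝ)/2 * α)
          * ((2 * Real.pi) ^ (-(d:ℝ)/2 * (1 - α)) * S₂.det ^ (-(1:ℝ)/2 * (1 - α))))
        * Real.exp (-(1/2) * (α * ((x - μ₁) ⬝ᵥ S₁⁻¹ *ᵥ (x - μ₁))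
            + (1 - α) * ((x - μ₂) ⬝ᵥ S₂⁻¹ *ᵥ (x - μ₂)))) := by
    intro x
    rw [hpow μ₁ S₁ hS₁ α x, hpow μ₂ S₂ hS₂ (1 - α) x]
    have harr : ∀ p q r s t u : ℝ, p * q * r * (s * t * u) = (p * q * (s * t)) * (r * u) := by
      intros; ring
    rw [harr, ← Real.exp_add]
    congr 1
    ring
  calc ∫ x : Fin d → ℝ, gaussPdf μ₁ S₁ x ^ α * gaussPdf μ₂ S₂ x ^ (1 - α)
      = ∫ x : Fin d → ℝ, ((2 * Real.pi) ^ (-(d:ℝ)/2 * α) * S₁.det ^ (-(1:ℝ)/2 * α)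
          * ((2 * Real.pi) ^ (-(d:ℝ)/2 * (1 - α)) * S₂.det ^ (-(1:ℝ)/2 * (1 - α))))
        * Real.exp (-(1/2) * (α * ((x - μ₁) ⬝ᵥ S₁⁻¹ *ᵥ (x - μ₁))
            + (1 - α) * ((x - μ₂) ⬝ᵥ S₂⁻¹ *ᵥ (x - μ₂)))) := by simp only [hpt]
    _ = ((2 * Real.pi) ^ (-(d:ℝ)/2 * α) * S₁.det ^ (-(1:ℝ)/2 * α)
          * ((2 * Real.pi) ^ (-(d:ℝ)/2 * (1 - α)) * S₂.det ^ (-(1:ℝ)/2 * (1 - α))))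
        * ∫ x : Fin d → ℝ, Real.exp (-(1/2) * (α * ((x - μ₁) ⬝ᵥ S₁⁻¹ *ᵥ (x - μ₁))
            + (1 - α) * ((x - μ₂) ⬝ᵥ S₂⁻¹ *ᵥ (x - μ₂)))) := integral_const_mul _ _
    _ = ((2 * Real.pi) ^ (-(d:ℝ)/2 * α) * S₁.det ^ (-(1:ℝ)/2 * α)
          * ((2 * Real.pi) ^ (-(d:ℝ)/2 * (1 - α)) * S₂.det ^ (-(1:ℝ)/2 * (1 - α))))
        * ∫ x : Fin d → ℝ, Real.exp (-(1/2) * (α * ((x + m - μ₁) ⬝ᵥ S₁⁻¹ *ᵥ (x + m - μ₁))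
            + (1 - α) * ((x + m - μ₂) ⬝ᵥ S₂⁻¹ *ᵥ (x + m - μ₂)))) := by
        congr 1
        exact (integral_add_right_eq_self (fun y : Fin d → ℝ =>
          Real.exp (-(1/2) * (α * ((y - μ₁) ⬝ᵥ S₁⁻¹ *ᵥ (y - μ₁))
            + (1 - α) * ((y - μ₂) ⬝ᵥ S₂⁻¹ *ᵥ (y - μ₂))))) m).symm
    _ = ((2 * Real.pi) ^ (-(d:ℝ)/2 * α) * S₁.det ^ (-(1:ℝ)/2 * α)
          * ((2 * Real.pi) ^ (-(d:ℝ)/2 * (1 - α)) * S₂.det ^ (-(1:ℝ)/2 * (1 - α))))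
        * ∫ x : Fin d → ℝ, Real.exp (-(1/2) * (α * (1 - α) * (δ ⬝ᵥ M⁻¹ *ᵥ δ)))
            * Real.exp (-(1/2) * (x ⬝ᵥ A *ᵥ x)) := by
        congr 1
        congr 1
        funext x
        rw [hQ x, ← Real.exp_add]
        congr 1
        ring
    _ = ((2 * Real.pi) ^ (-(d:ℝ)/2 * α) * S₁.det ^ (-(1:ℝ)/2 * α)
          * ((2 * Real.pi) ^ (-(d:ℝ)/2 * (1 - α)) * S₂.det ^ (-(1:ℝ)/2 * (1 - α))))
        * (Real.exp (-(1/2) * (α * (1 - α) * (δ ⬝ᵥ M⁻¹ *ᵥ δ)))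
            * ((2 * Real.pi) ^ ((d:ℝ)/2) * A.det ^ (-(1:ℝ)/2))) := by
        rw [integral_const_mul, my_integral_exp_quad hApos]
    _ = M.det ^ (-(1:ℝ)/2) * S₁.det ^ ((1 - α)/2) * S₂.det ^ (α/2)
        * Real.exp ((α * (α - 1) / 2) * ((μ₁ - μ₂) ⬝ᵥ M⁻¹ *ᵥ (μ₁ - μ₂))) := by
        have f0 : (2 * Real.pi) ^ (-(d:ℝ)/2 * α) * (2 * Real.pi) ^ (-(d:ℝ)/2 * (1 - α))
            * (2 * Real.pi) ^ ((d:ℝ)/2) = 1 := by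
          rw [← Real.rpow_add h2π, ← Real.rpow_add h2π,
            show -(d:ℝ)/2 * α + -(d:ℝ)/2 * (1 - α) + (d:ℝ)/2 = 0 by ring, Real.rpow_zero]
        have f1 : S₁.det ^ (-(1:ℝ)/2 * α) * S₁.det ^ ((1:ℝ)/2) = S₁.det ^ ((1 - α)/2) := by
          rw [← Real.rpow_add hs1]; congr 1; ring
        have f2 : S₂.det ^ (-(1:ℝ)/2 * (1 - α)) * S₂.det ^ ((1:ℝ)/2) = S₂.det ^ (α/2) := by
          rw [← Real.rpow_add hs2]; congr 1; ring
        have f3 : Real.exp (-(1/2) * (α * (1 - α) * (δ ⬝ᵥ M⁻¹ *ᵥ δ)))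
            = Real.exp ((α * (α - 1) / 2) * ((μ₁ - μ₂) ⬝ᵥ M⁻¹ *ᵥ (μ₁ - μ₂))) := by
          have hneg : μ₁ - μ₂ = -δ := by rw [hδ]; abel
          rw [hneg, Matrix.mulVec_neg, neg_dotProduct, dotProduct_neg, neg_neg]
          congr 1
          ring
        calc ((2 * Real.pi) ^ (-(d:ℝ)/2 * α) * S₁.det ^ (-(1:ℝ)/2 * α)
              * ((2 * Real.pi) ^ (-(d:ℝ)/2 * (1 - α)) * S₂.det ^ (-(1:ℝ)/2 * (1 - α))))
            * (Real.exp (-(1/2) * (α * (1 - α) * (δ ⬝ᵥ M⁻¹ *ᵥ δ)))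
                * ((2 * Real.pi) ^ ((d:ℝ)/2) * A.det ^ (-(1:ℝ)/2)))
            = ((2 * Real.pi) ^ (-(d:ℝ)/2 * α) * (2 * Real.pi) ^ (-(d:ℝ)/2 * (1 - α))
                  * (2 * Real.pi) ^ ((d:ℝ)/2))
              * (S₁.det ^ (-(1:ℝ)/2 * α) * S₁.det ^ ((1:ℝ)/2))
              * (S₂.det ^ (-(1:ℝ)/2 * (1 - α)) * S₂.det ^ ((1:ℝ)/2))
              * M.det ^ (-(1:ℝ)/2)
              * Real.exp (-(1/2) * (α * (1 - α) * (δ ⬝ᵥ M⁻¹ *ᵥ δ))) := by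
              rw [hAdetpow]; ring
          _ = M.det ^ (-(1:ℝ)/2) * S₁.det ^ ((1 - α)/2) * S₂.det ^ (α/2)
              * Real.exp ((α * (α - 1) / 2) * ((μ₁ - μ₂) ⬝ᵥ M⁻¹ *ᵥ (μ₁ - μ₂))) := by
              rw [f0, f1, f2, f3]; ring
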